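/- arXiv:1610.08843 — 2 statements merged into one kernel-verified Lean document; each statement's English description precedes it below -/
import Mathlib

section
/- Given a finite chain of lists of names ã₁ ≻ ã₂ ≻ ⋯ ≻ ã_k (where ã ≺ b̃ means ã is obtained from b̃ = b₁⋯bₙ by removing a nonempty prefix b₁⋯b_j and appending j fresh names not occurring in b̃), with all lists of equal length, k greater than the length of ã₁, and such that once a name is removed from some ã_i it never reappears in any later ã_j, there exists n ≤ |ã₁| such that for all j ≥ n the lists ã₁ and ã_j are disjoint. -/
/-- `Prec u x` (written `u ≺ x` in the paper): `u` is obtained from `x = x₁⋯xₙ`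
by removing a nonempty prefix `x₁⋯x_k` (with `k ≥ 1`) and appending `k` fresh
names `a₁⋯a_k` not occurring in `x`. -/
def Prec {α : Type*} (u x : List α) : Prop :=
  ∃ (k : ℕ) (a : List α), 1 ≤ k ∧ k ≤ x.length ∧ a.length = k ∧
    u = x.drop k ++ a ∧ ∀ b ∈ a, b ∉ x

/-- Lemma A.3 of the paper: for a finite chain `ã₁ ≻ ã₂ ≻ ⋯ ≻ ã_k`
(here `c 0 ≻ c 1 ≻ ⋯ ≻ c (k-1)`), with all lists of equal length,
`k > |ã₁|`, and such that once a name is removed it never reappears,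
there exists `n ≤ |ã₁|` such that for all `j ≥ n` (within the chain)
the lists `ã₁` and `ã_j` are disjoint. -/
theorem chain_eventually_disjoint {α : Type*} (k : ℕ) (c : ℕ → List α)
    (hk : (c 0).length < k)
    (hchain : ∀ i, i + 1 < k → Prec (c (i + 1)) (c i))
    (hlen : ∀ i j, i < k → j < k → (c i).length = (c j).length)
    (hnore : ∀ i a, i + 1 < k → a ∈ c i → a ∉ c (i + 1) →
      ∀ j, i < j → j < k → a ∉ c j) :
    ∃ n ≤ (c 0).length, ∀ j, n ≤ j → j < k → ∀ a ∈ c 0, a ∉ c j := by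
  set n := (c 0).length with hn
  have P : ∀ i, i < k → ∀ a ∈ c 0, a ∈ c i ∨ (∀ i', i ≤ i' → i' < k → a ∉ c i') := by
    intro i
    induction i with
    | zero => intro _ a ha; exact Or.inl ha
    | succ i ih =>
      intro h a ha
      rcases ih (by omega) a ha with h1 | h1
      · by_cases h2 : a ∈ c (i + 1)
        · exact Or.inl h2
        · right
          intro i' hi1 hi2
          rcases Nat.eq_or_lt_of_le hi1 with rfl | hlt
          · exact h2
          · exact hnore i a h h1 h2 i' (by omega) hi2
      · right; intro i' hi1 hi2; exact h1 i' (by omega) hi2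
  have claim : ∀ j, j + 1 < k → ∀ a ∈ c 0, a ∈ c (j + 1) → a ∈ c j := by
    intro j hj a ha haj
    rcases P j (by omega) a ha with h | h
    · exact h
    · exact absurd haj (h (j + 1) (by omega) hj)
  have Inv : ∀ j, j < k → ∀ a ∈ c 0, a ∉ (c j).drop (n - j) := by
    intro j
    induction j with
    | zero =>
      intro _ a _
      rw [Nat.sub_zero, hn, List.drop_length]
      simp
    | succ j ih =>
      intro hj a ha hmem
      obtain ⟨m, fr, hm1, hm2, hfr, heq, hfresh⟩ := hchain j hj
      have hacj : a ∈ c j := claim j hj a ha (List.mem_of_mem_drop hmem)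
      rw [heq, List.drop_append, List.mem_append] at hmem
      rcases hmem with hmem | hmem
      · rw [List.drop_drop] at hmem
        have he : m + (n - (j + 1)) = (n - j) + (n - (j + 1) + m - (n - j)) := by omega
        rw [he, ← List.drop_drop] at hmem
        exact ih (by omega) a ha (List.mem_of_mem_drop hmem)
      · exact hfresh a (List.mem_of_mem_drop hmem) hacj
  refine ⟨n, le_refl n, ?_⟩
  intro j hj1 hj2 a ha haj
  have h0 : n - j = 0 := by omega
  have := Inv j hj2 a ha
  rw [h0, List.drop_zero] at this
  exact this haj
end

section
/- For the relation ≺ on finite lists of names (ũ ≺ x̃ iff ũ replaces a nonempty prefix of x̃ by names not occurring in x̃, preserving length), there is no infinite descending chain ã₁ ≻ ã₂ ≻ ã₃ ≻ ⋯ in which, once a name is removed, it never reappears: any such chain restricted to sharing a name with ã₁ has length at most |ã₁| + 1. -/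
/-- There is no infinite descending `≺`-chain sharing names with the first list:
for a chain `ã₁ ≻ ã₂ ≻ ⋯` (here `c 0 ≻ c 1 ≻ ⋯`, so the 1-based `ã_i` is
`c (i-1)`) with the no-reappearance property, for every 1-based index
`i > |ã₁|`, i.e. every 0-based index `j ≥ |ã₁|`, the lists `ã_i` and `ã₁`
are disjoint.  Hence the part of the chain sharing a name with `ã₁` has
length at most `|ã₁| + 1`. -/
theorem chain_no_infinite_sharing {α : Type*} (c : ℕ → List α)
    (hchain : ∀ i, Prec (c (i + 1)) (c i))
    (hnore : ∀ i a, a ∈ c i → a ∉ c (i + 1) → ∀ j, i < j → a ∉ c j) :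
    ∀ j, (c 0).length ≤ j → ∀ a ∈ c j, a ∉ c 0 := by
  -- Once a name is gone, it stays gone (given it was in `c 0`).
  have hgone : ∀ i b, b ∉ c i → b ∈ c 0 → ∀ m, i ≤ m → b ∉ c m := by
    intro i
    induction i with
    | zero => intro b h h0; exact absurd h0 h
    | succ i ih =>
      intro b h h0 m hm
      by_cases hb : b ∈ c i
      · exact hnore i b hb h m (lt_of_lt_of_le (Nat.lt_succ_self i) hm)
      · exact ih b hb h0 m (le_trans (Nat.le_succ i) hm)
  -- Invariant: `c j` is a drop of `c 0` by at least `j`, plus names not in `c 0`.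
  have key : ∀ j, ∃ m r, j ≤ m ∧ c j = (c 0).drop m ++ r ∧ ∀ b ∈ r, b ∉ c 0 := by
    intro j
    induction j with
    | zero => exact ⟨0, [], le_refl 0, by simp, by simp⟩
    | succ j ih =>
      obtain ⟨m, r, hjm, hcj, hr⟩ := ih
      obtain ⟨k, a, hk1, hk, hak, hu, hfresh⟩ := hchain j
      refine ⟨m + k, r.drop (k - ((c 0).drop m).length) ++ a, by omega, ?_, ?_⟩
      · rw [hu, hcj, List.drop_append, List.drop_drop, List.append_assoc]
      · intro b hb
        rcases List.mem_append.mp hb with hb | hb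
        · exact hr b (List.mem_of_mem_drop hb)
        · intro hb0
          have hnj : b ∉ c j := hfresh b hb
          have hin : b ∈ c (j + 1) := by
            rw [hu]; exact List.mem_append.mpr (Or.inr hb)
          exact hgone j b hnj hb0 (j + 1) (Nat.le_succ j) hin
  intro j hj a haj ha0
  obtain ⟨m, r, hjm, hcj, hr⟩ := key j
  rw [hcj] at haj
  rcases List.mem_append.mp haj with h | h
  · have hnil : (c 0).drop m = [] := List.drop_eq_nil_of_le (by omega)
    simp [hnil] at h
  · exact hr a h ha0
end
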